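/- Let λ and μ be partitions of n with K_{λμ} = 1 and ℓ(λ) = h ≤ ℓ(μ). Then the unique semistandard Young tableau T of shape λ and weight μ has the property that the first entry in each row i of T equals i, for i = 1, ..., h. -/

import Mathlib

/-- A partition encoded as a weakly decreasing, finitely supported function `ℕ → ℕ`
(0-indexed: `l 0` is the first part). -/
def IsPartition (l : ℕ → ℕ) : Prop :=
  Antitone l ∧ ∃ N, ∀ i, N ≤ i → l i = 0

/-- The size (sum of the parts). -/
noncomputable def psize (l : ℕ → ℕ) : ℕ := ∑ᶠ i, l i

/-- Dominance order: every partial sum of `l` is at least that of `m`. -/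
def Dominates (l m : ℕ → ℕ) : Prop :=
  ∀ k, ∑ i ∈ Finset.range k, m i ≤ ∑ i ∈ Finset.range k, l i

/-- `l` has exactly `h` (nonzero) parts. -/
def PartLength (l : ℕ → ℕ) (h : ℕ) : Prop :=
  (∀ i, i < h → 0 < l i) ∧ ∀ i, h ≤ i → l i = 0

/-- A semistandard Young tableau of shape `l`: positive entries in the cells
`(i, j)` with `j < l i`, zero outside, rows weakly increasing, columns strictly
increasing. -/
def IsSSYT (l : ℕ → ℕ) (T : ℕ → ℕ → ℕ) : Prop :=
  (∀ i j, j < l i → 1 ≤ T i j) ∧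
  (∀ i j, l i ≤ j → T i j = 0) ∧
  (∀ i j k, j ≤ k → k < l i → T i j ≤ T i k) ∧
  (∀ i i' j, i < i' → j < l i' → T i j < T i' j)

/-- The number of cells of `T` (inside shape `l`) with entry `m + 1`. -/
noncomputable def entryCount (l : ℕ → ℕ) (T : ℕ → ℕ → ℕ) (m : ℕ) : ℕ :=
  Set.ncard {p : ℕ × ℕ | p.2 < l p.1 ∧ T p.1 p.2 = m + 1}

/-- `T` has weight `w`: the entry `m + 1` occurs `w m` times. -/
def HasWeight (l : ℕ → ℕ) (T : ℕ → ℕ → ℕ) (w : ℕ → ℕ) : Prop :=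
  ∀ m, entryCount l T m = w m

/-- The Kostka number: the number of semistandard Young tableaux of shape `l`
and weight `w`. -/
noncomputable def kostka (l w : ℕ → ℕ) : ℕ :=
  Set.ncard {T : ℕ → ℕ → ℕ | IsSSYT l T ∧ HasWeight l T w}

lemma aux_col_lower {lam : ℕ → ℕ} {T : ℕ → ℕ → ℕ} (hanti : Antitone lam)
    (hT : IsSSYT lam T) : ∀ i j, j < lam i → i + 1 ≤ T i j := by
  intro i
  induction i with
  | zero => exact fun j hj => hT.1 0 j hj
  | succ i ih =>
    intro j hj
    have hj' : j < lam i := lt_of_lt_of_le hj (hanti (Nat.le_succ i))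
    have := hT.2.2.2 i (i + 1) j (Nat.lt_succ_self i) hj
    have := ih j hj'
    omega

lemma aux_shape_finite {lam : ℕ → ℕ} {h : ℕ} (hanti : Antitone lam)
    (hl : PartLength lam h) : {p : ℕ × ℕ | p.2 < lam p.1}.Finite := by
  apply Set.Finite.subset ((Set.finite_Iio h).prod (Set.finite_Iio (lam 0)))
  rintro ⟨a, b⟩ hab
  simp only [Set.mem_setOf_eq] at hab
  constructor
  · by_contra hc
    have := hl.2 a (by simpa using hc)
    omega
  · exact lt_of_lt_of_le hab (hanti (Nat.zero_le a))

theorem stmt6 (n h l : ℕ) (lam mu : ℕ → ℕ)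
    (hlp : IsPartition lam) (hln : psize lam = n)
    (hmp : IsPartition mu) (hmn : psize mu = n)
    (hk : kostka lam mu = 1)
    (hlh : PartLength lam h) (hml : PartLength mu l) (hhl : h ≤ l) :
    ∀ T, IsSSYT lam T → HasWeight lam T mu → ∀ i, i < h → T i 0 = i + 1 := by
  intro T hT hW
  have hanti := hlp.1
  have hmanti := hmp.1
  have hshape := aux_shape_finite hanti hlh
  have hSfin : ∀ m, {p : ℕ × ℕ | p.2 < lam p.1 ∧ T p.1 p.2 = m + 1}.Finite :=
    fun m => hshape.subset (fun p hp => hp.1)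
  intro r
  induction r using Nat.strong_induction_on with
  | _ r ih =>
  intro hr
  have hge : r + 1 ≤ T r 0 := aux_col_lower hanti hT r 0 (hlh.1 r hr)
  by_contra hne
  have hgt : r + 2 ≤ T r 0 := by omega
  obtain ⟨u, hu, hru⟩ : ∃ u, T r 0 = u + 2 ∧ r ≤ u := ⟨T r 0 - 2, by omega, by omega⟩
  set A : Set (ℕ × ℕ) := {p : ℕ × ℕ | p.2 < lam p.1 ∧ T p.1 p.2 = u + 1} with hA
  set B : Set (ℕ × ℕ) := {p : ℕ × ℕ | p.2 < lam p.1 ∧ T p.1 p.2 = u + 2} with hB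
  have hAcard : A.ncard = mu u := hW u
  have hBcard : B.ncard = mu (u + 1) := hW (u + 1)
  have hAfin : A.Finite := hSfin u
  have hBfin : B.Finite := hSfin (u + 1)
  have hr0B : ((r, 0) : ℕ × ℕ) ∈ B := ⟨hlh.1 r hr, hu⟩
  have hmuu1 : 0 < mu (u + 1) := by
    rw [← hBcard]
    exact (Set.ncard_pos hBfin).mpr ⟨_, hr0B⟩
  have hul : u < l := by
    by_contra hc
    have := hml.2 (u + 1) (by omega)
    omega
  have hmuu : 0 < mu u := hml.1 u hul
  have hAne : A.Nonempty := by
    apply Set.nonempty_of_ncard_ne_zero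
    omega
  -- every cell with value u+1 lies in a row < r and column ≥ 1
  have hAlt : ∀ a b, b < lam a → T a b = u + 1 → a < r := by
    intro a b hb hv
    by_contra hc
    push_neg at hc
    have hah : a < h := by
      by_contra hc2
      have := hlh.2 a (by omega)
      omega
    have h1 : T a 0 ≤ T a b := hT.2.2.1 a 0 b (Nat.zero_le b) hb
    rcases eq_or_lt_of_le hc with heq | hlt
    · rw [← heq] at h1 hv
      omega
    · have := hT.2.2.2 r a 0 hlt (hlh.1 a hah)
      omega
  have hA1 : ∀ a b, b < lam a → T a b = u + 1 → 1 ≤ b := by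
    intro a b hb hv
    by_contra hc
    have hb0 : b = 0 := by omega
    have har := hAlt a b hb hv
    have := ih a har (har.trans hr)
    rw [hb0] at hv
    omega
  by_cases hfree : ∃ p ∈ A, ¬(p.2 < lam (p.1 + 1) ∧ T (p.1 + 1) p.2 = u + 2)
  · -- Case A: a free cell exists; build a second tableau
    have hFfin : {p ∈ A | ¬(p.2 < lam (p.1 + 1) ∧ T (p.1 + 1) p.2 = u + 2)}.Finite :=
      hAfin.subset (fun p hp => hp.1)
    obtain ⟨⟨i, j⟩, hijF, hmax⟩ :=
      Set.exists_max_image _ Prod.snd hFfin hfree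
    obtain ⟨⟨hjl, hval⟩, hfr⟩ := hijF
    simp only at hjl hval hfr
    have hilt : i < r := hAlt i j hjl hval
    have hijA : ((i, j) : ℕ × ℕ) ∈ A := ⟨hjl, hval⟩
    have hj1 : 1 ≤ j := hA1 i j hjl hval
    have hbelow : ∀ a, i < a → j < lam a → u + 3 ≤ T a j := by
      intro a ha hja
      have hji1 : j < lam (i + 1) := lt_of_lt_of_le hja (hanti ha)
      have h1 : T i j < T (i + 1) j := hT.2.2.2 i (i + 1) j (Nat.lt_succ_self i) hji1
      have h2 : T (i + 1) j ≠ u + 2 := fun hc => hfr ⟨hji1, hc⟩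
      have h3 : u + 3 ≤ T (i + 1) j := by omega
      rcases Nat.lt_or_ge (i + 1) a with hlt | hge
      · have := hT.2.2.2 (i + 1) a j hlt hja
        omega
      · have ha1 : a = i + 1 := by omega
        rw [ha1]
        exact h3
    have hright : ∀ c, j < c → c < lam i → u + 2 ≤ T i c := by
      intro c hc hcl
      have h1 : T i (j + 1) ≤ T i c := hT.2.2.1 i (j + 1) c hc hcl
      have hj1l : j + 1 < lam i := by omega
      have h2 : T i j ≤ T i (j + 1) := hT.2.2.1 i j (j + 1) (Nat.le_succ j) hj1l
      by_contra hcon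
      have hval2 : T i (j + 1) = u + 1 := by omega
      have hfree2 : ¬(j + 1 < lam (i + 1) ∧ T (i + 1) (j + 1) = u + 2) := by
        rintro ⟨hl2, hv2⟩
        have hjl2 : j < lam (i + 1) := by omega
        have ha : T (i + 1) j ≤ T (i + 1) (j + 1) := hT.2.2.1 (i + 1) j (j + 1) (Nat.le_succ j) hl2
        have hb2 : T i j < T (i + 1) j := hT.2.2.2 i (i + 1) j (Nat.lt_succ_self i) hjl2
        exact hfr ⟨hjl2, by omega⟩
      have := hmax (i, j + 1) ⟨⟨hj1l, hval2⟩, hfree2⟩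
      simp only at this
      omega
    -- the modified tableau
    set T' : ℕ → ℕ → ℕ := fun a b =>
      if a = i ∧ b = j then u + 2 else if a = r ∧ b = 0 then u + 1 else T a b with hT'def
    have hir : i ≠ r := Nat.ne_of_lt hilt
    have hT'ij : T' i j = u + 2 := by simp [hT'def]
    have hT'r0 : T' r 0 = u + 1 := by
      have h1 : ¬(r = i ∧ (0 : ℕ) = j) := by omega
      simp only [hT'def]
      rw [if_neg h1]
      simp
    have hT'other : ∀ a b, ¬(a = i ∧ b = j) → ¬(a = r ∧ b = 0) → T' a b = T a b := by
      intro a b h1 h2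
      simp only [hT'def, if_neg h1, if_neg h2]
    have hT'ssyt : IsSSYT lam T' := by
      refine ⟨?_, ?_, ?_, ?_⟩
      · intro a b hb
        by_cases h1 : a = i ∧ b = j
        · rw [h1.1, h1.2, hT'ij]; omega
        by_cases h2 : a = r ∧ b = 0
        · rw [h2.1, h2.2, hT'r0]; omega
        · rw [hT'other a b h1 h2]; exact hT.1 a b hb
      · intro a b hb
        by_cases h1 : a = i ∧ b = j
        · exfalso; rw [h1.1, h1.2] at hb; omega
        by_cases h2 : a = r ∧ b = 0
        · exfalso; rw [h2.1, h2.2] at hb; have := hlh.1 r hr; omega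
        · rw [hT'other a b h1 h2]; exact hT.2.1 a b hb
      · -- rows weakly increasing
        intro a b c hbc hcl
        by_cases h1 : a = i ∧ b = j
        · rw [h1.1, h1.2, hT'ij]
          rw [h1.1] at hcl
          rcases eq_or_lt_of_le hbc with heq | hlt
          · rw [← heq, h1.2, hT'ij]
          · rw [h1.2] at hlt
            rw [hT'other i c (by omega) (by omega)]
            exact hright c hlt hcl
        by_cases h2 : a = r ∧ b = 0
        · rw [h2.1, h2.2, hT'r0]
          rw [h2.1] at hcl
          rcases Nat.eq_zero_or_pos c with rfl | hc
          · rw [hT'r0]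
          · rw [hT'other r c (by omega) (by omega)]
            have := hT.2.2.1 r 0 c (Nat.zero_le c) hcl
            omega
        by_cases h3 : a = i ∧ c = j
        · rw [h3.1, h3.2, hT'ij]
          rw [h3.1] at hcl
          rw [hT'other i b (fun hc => h1 ⟨h3.1, hc.2⟩) (by omega)]
          rw [h3.1] at h1
          have hbj : b < j := by
            rcases eq_or_lt_of_le hbc with heq | hlt
            · exact absurd (heq.trans h3.2) (fun hc => h1 ⟨rfl, hc⟩)
            · omega
          have := hT.2.2.1 i b j (le_of_lt hbj) hjl
          omega
        by_cases h4 : a = r ∧ c = 0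
        · exfalso; exact h2 ⟨h4.1, by omega⟩
        · rw [hT'other a b h1 h2, hT'other a c h3 h4]
          exact hT.2.2.1 a b c hbc hcl
      · -- columns strictly increasing
        intro a a' b haa hb
        by_cases h1 : a = i ∧ b = j
        · rw [h1.1, h1.2, hT'ij]
          rw [h1.1] at haa
          rw [h1.2] at hb
          rw [hT'other a' j (by omega) (by omega)]
          exact hbelow a' haa hb
        by_cases h2 : a = r ∧ b = 0
        · rw [h2.1, h2.2, hT'r0]
          rw [h2.1] at haa
          rw [h2.2] at hb
          rw [hT'other a' 0 (by omega) (by omega)]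
          have := hT.2.2.2 r a' 0 haa hb
          omega
        by_cases h3 : a' = i ∧ b = j
        · rw [h3.1, h3.2, hT'ij]
          rw [h3.1] at haa hb
          rw [h3.2] at hb
          rw [hT'other a j (fun hc => h1 ⟨hc.1, h3.2⟩) (by omega)]
          have := hT.2.2.2 a i j haa hb
          omega
        by_cases h4 : a' = r ∧ b = 0
        · rw [h4.1, h4.2, hT'r0]
          rw [h4.1] at haa
          rw [h4.2] at hb
          rw [hT'other a 0 (by omega) (by omega)]
          have har : a < h := lt_trans haa hr
          have := ih a haa har
          omega
        · rw [hT'other a b h1 h2, hT'other a' b h3 h4]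
          exact hT.2.2.2 a a' b haa hb
    have hW' : HasWeight lam T' mu := by
      intro m
      rcases eq_or_ne m u with rfl | hmu
      · have hSeq : {p : ℕ × ℕ | p.2 < lam p.1 ∧ T' p.1 p.2 = m + 1}
            = insert ((r, 0) : ℕ × ℕ) (A \ {(i, j)}) := by
          ext ⟨a, b⟩
          simp only [Set.mem_setOf_eq, Set.mem_insert_iff, Set.mem_diff,
            Set.mem_singleton_iff, Prod.mk.injEq, hA]
          by_cases h1 : a = i ∧ b = j
          · rw [h1.1, h1.2, hT'ij]
            simp [hjl]
            omega
          by_cases h2 : a = r ∧ b = 0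
          · rw [h2.1, h2.2, hT'r0]
            simp [hlh.1 r hr]
          · rw [hT'other a b h1 h2]
            constructor
            · rintro ⟨hb1, hb2⟩
              exact Or.inr ⟨⟨hb1, hb2⟩, fun hc => h1 ⟨hc.1, hc.2⟩⟩
            · rintro (⟨rfl, rfl⟩ | ⟨⟨hb1, hb2⟩, _⟩)
              · exact absurd ⟨rfl, rfl⟩ h2
              · exact ⟨hb1, hb2⟩
        have hnm : ((r, 0) : ℕ × ℕ) ∉ A \ {((i, j) : ℕ × ℕ)} := by
          rintro ⟨hc, -⟩
          have : T r 0 = m + 1 := hc.2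
          omega
        show Set.ncard _ = mu m
        rw [hSeq, Set.ncard_insert_of_notMem hnm hAfin.diff,
          Set.ncard_diff_singleton_of_mem hijA]
        have hApos : 1 ≤ A.ncard := (Set.ncard_pos hAfin).mpr hAne
        omega
      rcases eq_or_ne m (u + 1) with rfl | hmu1
      · have hSeq : {p : ℕ × ℕ | p.2 < lam p.1 ∧ T' p.1 p.2 = u + 1 + 1}
            = insert ((i, j) : ℕ × ℕ) (B \ {(r, 0)}) := by
          ext ⟨a, b⟩
          simp only [Set.mem_setOf_eq, Set.mem_insert_iff, Set.mem_diff,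
            Set.mem_singleton_iff, Prod.mk.injEq, hB]
          by_cases h1 : a = i ∧ b = j
          · rw [h1.1, h1.2, hT'ij]
            simp [hjl]
          by_cases h2 : a = r ∧ b = 0
          · rw [h2.1, h2.2, hT'r0]
            simp
            omega
          · rw [hT'other a b h1 h2]
            constructor
            · rintro ⟨hb1, hb2⟩
              exact Or.inr ⟨⟨hb1, hb2⟩, fun hc => h2 ⟨hc.1, hc.2⟩⟩
            · rintro (⟨rfl, rfl⟩ | ⟨⟨hb1, hb2⟩, _⟩)
              · exact absurd ⟨rfl, rfl⟩ h1
              · exact ⟨hb1, hb2⟩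
        have hnm2 : ((i, j) : ℕ × ℕ) ∉ B \ {((r, 0) : ℕ × ℕ)} := by
          rintro ⟨hc, -⟩
          have : T i j = u + 1 + 1 := hc.2
          omega
        show Set.ncard _ = mu (u + 1)
        rw [hSeq, Set.ncard_insert_of_notMem hnm2 hBfin.diff,
          Set.ncard_diff_singleton_of_mem hr0B]
        have hBpos : 1 ≤ B.ncard := (Set.ncard_pos hBfin).mpr ⟨_, hr0B⟩
        omega
      · have hSeq : {p : ℕ × ℕ | p.2 < lam p.1 ∧ T' p.1 p.2 = m + 1}
            = {p : ℕ × ℕ | p.2 < lam p.1 ∧ T p.1 p.2 = m + 1} := by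
          ext ⟨a, b⟩
          simp only [Set.mem_setOf_eq]
          by_cases h1 : a = i ∧ b = j
          · rw [h1.1, h1.2, hT'ij, hval]
            omega
          by_cases h2 : a = r ∧ b = 0
          · rw [h2.1, h2.2, hT'r0, hu]
            omega
          · rw [hT'other a b h1 h2]
        show Set.ncard _ = mu m
        rw [hSeq]
        exact hW m
    obtain ⟨T0, hT0⟩ := Set.ncard_eq_one.mp hk
    have hmem1 : T ∈ {S : ℕ → ℕ → ℕ | IsSSYT lam S ∧ HasWeight lam S mu} := ⟨hT, hW⟩
    have hmem2 : T' ∈ {S : ℕ → ℕ → ℕ | IsSSYT lam S ∧ HasWeight lam S mu} := ⟨hT'ssyt, hW'⟩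
    rw [hT0] at hmem1 hmem2
    have hTT : T = T' := hmem1.trans hmem2.symm
    have := congrFun (congrFun hTT r) 0
    rw [hT'r0, hu] at this
    omega
  · -- Case B: every cell with value u+1 has a u+2 directly below
    push_neg at hfree
    have himg : insert ((r, 0) : ℕ × ℕ) ((fun p : ℕ × ℕ => (p.1 + 1, p.2)) '' A) ⊆ B := by
      rintro p (rfl | ⟨q, hq, rfl⟩)
      · exact hr0B
      · exact ⟨(hfree q hq).1, (hfree q hq).2⟩
    have hnot : ((r, 0) : ℕ × ℕ) ∉ (fun p : ℕ × ℕ => (p.1 + 1, p.2)) '' A := by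
      rintro ⟨q, hq, hqe⟩
      have h1 := hA1 q.1 q.2 hq.1 hq.2
      have h2 : q.2 = 0 := congrArg Prod.snd hqe
      omega
    have hinj : Function.Injective (fun p : ℕ × ℕ => (p.1 + 1, p.2)) := by
      rintro ⟨a, b⟩ ⟨c, d⟩ hcd
      simp only [Prod.mk.injEq] at hcd
      exact Prod.ext (by omega) hcd.2
    have hcards : A.ncard + 1 ≤ B.ncard := by
      have h1 : (insert ((r, 0) : ℕ × ℕ) ((fun p : ℕ × ℕ => (p.1 + 1, p.2)) '' A)).ncard
          = A.ncard + 1 := by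
        rw [Set.ncard_insert_of_notMem hnot (hAfin.image _),
          Set.ncard_image_of_injective A hinj]
      rw [← h1]
      exact Set.ncard_le_ncard himg hBfin
    have hmono : mu (u + 1) ≤ mu u := hmanti (by omega)
    omega
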